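/- Covering the surface of a D-dimensional hypersphere of radius R by spherical caps of half-angle φ ∈ (0, π/2) requires at least (1/sin φ)^(D−2) caps, for D ≥ 3. -/

import Mathlib

open MeasureTheory Metric intervalIntegral Real

set_option maxHeartbeats 1600000

namespace Stmt13

variable {n : ℕ}

variable {n : ℕ} {R : ℝ}

noncomputable def f (R : ℝ) (n : ℕ) (t : ℝ) : ℝ := Real.sqrt (R^2 - t^2) ^ n

lemma f_cont : Continuous (f R n) := (Real.continuous_sqrt.comp (by continuity)).pow n

lemma f_nonneg (t : ℝ) : 0 ≤ f R n t := pow_nonneg (Real.sqrt_nonneg _) n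

lemma keyB (hR : 0 < R) {φ : ℝ} (hφ0 : 0 ≤ φ) (hφ : φ ≤ π/2) :
    ∫ t in (R * Real.cos φ)..R, f R n t
      ≤ Real.sin φ^(n+1) * ∫ t in (0:ℝ)..R, f R n t := by
  set K := ∫ t in (0:ℝ)..R, f R n t with hK
  have hK0 : 0 ≤ K := intervalIntegral.integral_nonneg hR.le (fun t _ => f_nonneg t)
  set F : ℝ → ℝ := fun ψ => Real.sin ψ^(n+1) * K + ∫ t in R..(R * Real.cos ψ), f R n t with hF
  have hderiv : ∀ ψ : ℝ, HasDerivAt F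
      ((n+1) * Real.sin ψ^n * Real.cos ψ * K + f R n (R * Real.cos ψ) * (R * (-Real.sin ψ))) ψ := by
    intro ψ
    have h1 : HasDerivAt (fun ψ : ℝ => Real.sin ψ^(n+1) * K)
        ((n+1) * Real.sin ψ^n * Real.cos ψ * K) ψ := by
      have := ((Real.hasDerivAt_sin ψ).pow (n+1)).mul_const K
      simpa [mul_comm, mul_assoc, mul_left_comm] using this
    have hH : ∀ a : ℝ, HasDerivAt (fun a => ∫ t in R..a, f R n t) (f R n a) a := by
      intro a
      exact intervalIntegral.integral_hasDerivAt_right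
        (f_cont.intervalIntegrable _ _)
        (f_cont.stronglyMeasurableAtFilter _ _)
        f_cont.continuousAt
    have hc : HasDerivAt (fun ψ : ℝ => R * Real.cos ψ) (R * (-Real.sin ψ)) ψ :=
      (Real.hasDerivAt_cos ψ).const_mul R
    have h2 := HasDerivAt.comp ψ (hH (R * Real.cos ψ)) hc
    exact h1.add h2
  have hderiv' : ∀ ψ ∈ Set.Icc (0:ℝ) (π/2),
      deriv F ψ = Real.sin ψ^n * ((n+1) * Real.cos ψ * K - R^(n+1) * Real.sin ψ) := by
    intro ψ hψ
    rw [(hderiv ψ).deriv]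
    have hs : Real.sin ψ ≥ 0 := Real.sin_nonneg_of_nonneg_of_le_pi hψ.1
      (le_trans hψ.2 (by linarith [Real.pi_pos]))
    have : f R n (R * Real.cos ψ) = (R * Real.sin ψ)^n := by
      unfold f
      rw [show R^2 - (R * Real.cos ψ)^2 = (R * Real.sin ψ)^2 by
        have := Real.sin_sq_add_cos_sq ψ; ring_nf; nlinarith]
      rw [Real.sqrt_sq (by positivity)]
    rw [this]; ring
  have hdiff : ∀ x, DifferentiableAt ℝ F x := fun x => (hderiv x).differentiableAt
  have hcont : Continuous F := Differentiable.continuous (fun x => hdiff x)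
  have hFφ : 0 ≤ F φ := by
    by_cases hcase : R^(n+1) * Real.sin φ ≤ (n+1) * Real.cos φ * K
    · have hmono : MonotoneOn F (Set.Icc 0 φ) := by
        apply monotoneOn_of_deriv_nonneg (convex_Icc 0 φ) hcont.continuousOn
          (fun x _ => (hdiff x).differentiableWithinAt)
        intro x hx
        rw [interior_Icc] at hx
        obtain ⟨hx1, hx2⟩ := hx
        have hx' : x ∈ Set.Icc (0:ℝ) (π/2) := ⟨hx1.le, le_trans hx2.le hφ⟩
        rw [hderiv' x hx']
        have hsx : 0 ≤ Real.sin x := Real.sin_nonneg_of_nonneg_of_le_pi hx'.1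
          (le_trans hx'.2 (by linarith [Real.pi_pos]))
        have hcos : Real.cos φ ≤ Real.cos x :=
          Real.cos_le_cos_of_nonneg_of_le_pi hx'.1 (by linarith [Real.pi_pos]) hx2.le
        have hsin : Real.sin x ≤ Real.sin φ :=
          Real.strictMonoOn_sin.monotoneOn ⟨by linarith [Real.pi_pos], hx'.2⟩
            ⟨by linarith [Real.pi_pos], hφ⟩ hx2.le
        have hle : R^(n+1) * Real.sin x ≤ (n+1) * Real.cos x * K := by
          calc R^(n+1) * Real.sin x ≤ R^(n+1) * Real.sin φ :=
                mul_le_mul_of_nonneg_left hsin (by positivity)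
            _ ≤ (n+1) * Real.cos φ * K := hcase
            _ ≤ (n+1) * Real.cos x * K := by
                apply mul_le_mul_of_nonneg_right _ hK0
                exact mul_le_mul_of_nonneg_left hcos (by positivity)
        have h0 : 0 ≤ (n+1) * Real.cos x * K - R^(n+1) * Real.sin x := by linarith
        positivity
      have hF0 : F 0 = 0 := by
        show Real.sin 0 ^(n+1) * K + (∫ t in R..(R * Real.cos 0), f R n t) = 0
        rw [Real.sin_zero, Real.cos_zero, mul_one]
        simp [zero_pow (Nat.succ_ne_zero n)]
      have := hmono (Set.left_mem_Icc.2 hφ0) ⟨hφ0, le_refl φ⟩ hφ0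
      rw [hF0] at this; exact this
    · push_neg at hcase
      have hanti : AntitoneOn F (Set.Icc φ (π/2)) := by
        apply antitoneOn_of_deriv_nonpos (convex_Icc φ (π/2)) hcont.continuousOn
          (fun x _ => (hdiff x).differentiableWithinAt)
        intro x hx
        rw [interior_Icc] at hx
        obtain ⟨hx1, hx2⟩ := hx
        have hx' : x ∈ Set.Icc (0:ℝ) (π/2) := ⟨le_trans hφ0 hx1.le, hx2.le⟩
        rw [hderiv' x hx']
        have hsx : 0 ≤ Real.sin x := Real.sin_nonneg_of_nonneg_of_le_pi hx'.1
          (le_trans hx'.2 (by linarith [Real.pi_pos]))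
        have hcos : Real.cos x ≤ Real.cos φ :=
          Real.cos_le_cos_of_nonneg_of_le_pi hφ0 (by linarith [Real.pi_pos]) hx1.le
        have hsin : Real.sin φ ≤ Real.sin x :=
          Real.strictMonoOn_sin.monotoneOn ⟨by linarith [Real.pi_pos], hφ⟩
            ⟨by linarith [Real.pi_pos], hx'.2⟩ hx1.le
        have h1 : (n+1) * Real.cos x * K ≤ (n+1) * Real.cos φ * K := by
          apply mul_le_mul_of_nonneg_right _ hK0
          exact mul_le_mul_of_nonneg_left hcos (by positivity)
        have h2 : R^(n+1) * Real.sin φ ≤ R^(n+1) * Real.sin x :=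
          mul_le_mul_of_nonneg_left hsin (by positivity)
        have h0 : (n+1) * Real.cos x * K - R^(n+1) * Real.sin x ≤ 0 := by linarith
        exact mul_nonpos_of_nonneg_of_nonpos (by positivity) h0
      have hFhalf : F (π/2) = 0 := by
        show Real.sin (π/2) ^(n+1) * K + (∫ t in R..(R * Real.cos (π/2)), f R n t) = 0
        rw [Real.sin_pi_div_two, Real.cos_pi_div_two, mul_zero,
          intervalIntegral.integral_symm, ← hK]
        ring
      have := hanti ⟨le_refl φ, hφ⟩ (Set.right_mem_Icc.2 hφ) hφ
      rw [hFhalf] at this; exact this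
  have hFφ' : F φ = Real.sin φ^(n+1) * K - ∫ t in (R * Real.cos φ)..R, f R n t := by
    show Real.sin φ^(n+1) * K + (∫ t in R..(R * Real.cos φ), f R n t) = _
    rw [intervalIntegral.integral_symm]; ring
  linarith [hFφ, hFφ']


/-- K := ∫ t in 0..R, f -/
lemma keyK (hR : 0 < R) : R^(n+1)/(n+1) ≤ ∫ t in (0:ℝ)..R, f R n t := by
  have h1 : (∫ t in (0:ℝ)..R, (R - t)^n) = R^(n+1)/(n+1) := by
    have := intervalIntegral.integral_comp_sub_left (fun x => x ^ n) R (a := 0) (b := R)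
    rw [this]
    simp [integral_pow]
  rw [← h1]
  apply intervalIntegral.integral_mono_on hR.le
  · exact (Continuous.intervalIntegrable (by continuity) _ _)
  · exact (Continuous.intervalIntegrable f_cont _ _)
  · intro t ht
    unfold f
    apply pow_le_pow_left₀ (by linarith [ht.1, ht.2])
    rw [show R - t = Real.sqrt ((R-t)^2) by rw [Real.sqrt_sq (by linarith [ht.2])]]
    apply Real.sqrt_le_sqrt
    nlinarith [ht.1, ht.2]




noncomputable def ubvol (n : ℕ) : ENNReal := volume (ball (0 : EuclideanSpace ℝ (Fin n)) 1)

lemma vol_pi_sphere_slice {n : ℕ} {r : ℝ} (hr : 0 ≤ r) :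
    (volume : Measure (Fin n → ℝ)) {y | ∑ i, y i ^ 2 ≤ r ^ 2}
      = ENNReal.ofReal (r ^ n) * ubvol n := by
  have hmp := EuclideanSpace.volume_preserving_symm_measurableEquiv_toLp (Fin n)
  have hms : MeasurableSet {y : Fin n → ℝ | ∑ i, y i ^ 2 ≤ r ^ 2} := by
    apply measurableSet_le _ measurable_const
    exact Finset.measurable_sum _ (fun i _ => (measurable_pi_apply i).pow_const 2)
  have heq : (MeasurableEquiv.toLp 2 (Fin n → ℝ)).symm ⁻¹' {y | ∑ i, y i ^ 2 ≤ r ^ 2}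
      = closedBall (0 : EuclideanSpace ℝ (Fin n)) r := by
    ext x
    simp only [Set.mem_preimage, Set.mem_setOf_eq, mem_closedBall, dist_zero_right]
    have hnorm : ‖x‖ = Real.sqrt (∑ i, x i ^ 2) := by
      rw [EuclideanSpace.norm_eq]
      congr 1
      refine Finset.sum_congr rfl fun i _ => ?_
      rw [Real.norm_eq_abs, sq_abs]
    constructor
    · intro h
      have : ∑ i, ((MeasurableEquiv.toLp 2 (Fin n → ℝ)).symm x) i ^ 2 = ∑ i, x i ^ 2 := rfl
      rw [this] at h
      rw [hnorm]
      calc Real.sqrt (∑ i, x i ^ 2) ≤ Real.sqrt (r^2) := Real.sqrt_le_sqrt h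
        _ = r := Real.sqrt_sq hr
    · intro h
      show ∑ i, x i ^ 2 ≤ r ^ 2
      have h2 : ‖x‖^2 ≤ r^2 := by
        apply pow_le_pow_left₀ (norm_nonneg _) h
      rw [hnorm, Real.sq_sqrt (by positivity)] at h2
      exact h2
  rw [← hmp.measure_preimage hms.nullMeasurableSet, heq,
    Measure.addHaar_closedBall _ _ hr, finrank_euclideanSpace_fin]
  rfl

lemma vol_slice_set {n : ℕ} {a b : ℝ} (hab : a ≤ b) {g : ℝ → ℝ} (hg : Continuous g)
    (hg0 : ∀ t ∈ Set.Icc a b, 0 ≤ g t) :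
    (volume : Measure (ℝ × (Fin n → ℝ)))
      {p | p.1 ∈ Set.Icc a b ∧ ∑ i, p.2 i ^ 2 ≤ g p.1 ^ 2}
      = ENNReal.ofReal (∫ t in a..b, g t ^ n) * ubvol n := by
  have hms : MeasurableSet {p : ℝ × (Fin n → ℝ) | p.1 ∈ Set.Icc a b ∧ ∑ i, p.2 i ^ 2 ≤ g p.1 ^ 2} := by
    have h1 : IsClosed {p : ℝ × (Fin n → ℝ) | p.1 ∈ Set.Icc a b} :=
      isClosed_Icc.preimage continuous_fst
    have h2 : IsClosed {p : ℝ × (Fin n → ℝ) | ∑ i, p.2 i ^ 2 ≤ g p.1 ^ 2} := by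
      apply isClosed_le
      · exact continuous_finset_sum _ (fun i _ => ((continuous_apply i).comp continuous_snd).pow 2)
      · exact (hg.comp continuous_fst).pow 2
    exact (h1.inter h2).measurableSet
  rw [MeasureTheory.Measure.volume_eq_prod _ _, Measure.prod_apply hms]
  have hslice : (fun t => (volume : Measure (Fin n → ℝ))
      (Prod.mk t ⁻¹' {p : ℝ × (Fin n → ℝ) | p.1 ∈ Set.Icc a b ∧ ∑ i, p.2 i ^ 2 ≤ g p.1 ^ 2}))
      = (Set.Icc a b).indicator (fun t => ENNReal.ofReal (g t ^ n) * ubvol n) := by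
    funext t
    by_cases ht : t ∈ Set.Icc a b
    · rw [Set.indicator_of_mem ht]
      have : (Prod.mk t ⁻¹' {p : ℝ × (Fin n → ℝ) | p.1 ∈ Set.Icc a b ∧ ∑ i, p.2 i ^ 2 ≤ g p.1 ^ 2})
          = {y : Fin n → ℝ | ∑ i, y i ^ 2 ≤ (g t) ^ 2} := by
        ext y; simp [Set.mem_setOf_eq, ht.1, ht.2]
      rw [this, vol_pi_sphere_slice (hg0 t ht)]
    · rw [Set.indicator_of_notMem ht]
      have : (Prod.mk t ⁻¹' {p : ℝ × (Fin n → ℝ) | p.1 ∈ Set.Icc a b ∧ ∑ i, p.2 i ^ 2 ≤ g p.1 ^ 2})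
          = ∅ := by
        ext y
        simp only [Set.mem_preimage, Set.mem_setOf_eq, Set.mem_empty_iff_false, iff_false]
        rintro ⟨h1, -⟩; exact ht h1
      rw [this]; simp
  have h3 : (∫⁻ t, volume (Prod.mk t ⁻¹' {p : ℝ × (Fin n → ℝ) | p.1 ∈ Set.Icc a b ∧ ∑ i, p.2 i ^ 2 ≤ g p.1 ^ 2}))
      = ∫⁻ t in Set.Icc a b, ENNReal.ofReal (g t ^ n) * ubvol n := by
    rw [← lintegral_indicator measurableSet_Icc _]
    exact lintegral_congr (fun t => congrFun hslice t)
  rw [h3]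
  have hfin : ubvol n ≠ ⊤ := by
    unfold ubvol
    exact (measure_ball_lt_top).ne
  rw [lintegral_mul_const' _ _ hfin]
  congr 1
  have hint : IntegrableOn (fun t => g t ^ n) (Set.Icc a b) volume :=
    (hg.pow n).continuousOn.integrableOn_compact isCompact_Icc
  have hnn : 0 ≤ᵐ[volume.restrict (Set.Icc a b)] (fun t => g t ^ n) :=
    (ae_restrict_iff' measurableSet_Icc).2 (ae_of_all _ (fun t ht => pow_nonneg (hg0 t ht) n))
  rw [← MeasureTheory.ofReal_integral_eq_lintegral_ofReal hint hnn,
    intervalIntegral.integral_of_le hab, MeasureTheory.integral_Icc_eq_integral_Ioc]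


noncomputable def prodEquiv (n : ℕ) : EuclideanSpace ℝ (Fin (n+1)) ≃ᵐ ℝ × (Fin n → ℝ) :=
  (MeasurableEquiv.toLp 2 (Fin (n+1) → ℝ)).symm.trans
    (MeasurableEquiv.piFinSuccAbove (fun _ : Fin (n+1) => ℝ) 0)

lemma prodEquiv_mp : MeasurePreserving (prodEquiv n) volume volume :=
  ((MeasureTheory.volume_preserving_piFinSuccAbove (fun _ : Fin (n+1) => ℝ) 0).comp
    (EuclideanSpace.volume_preserving_symm_measurableEquiv_toLp (Fin (n+1))))

lemma prodEquiv_fst (x : EuclideanSpace ℝ (Fin (n+1))) : (prodEquiv n x).1 = x 0 := rfl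

lemma prodEquiv_snd_sum (x : EuclideanSpace ℝ (Fin (n+1))) :
    (x 0)^2 + ∑ i, ((prodEquiv n x).2 i)^2 = ∑ i, (x i)^2 := by
  have : ∀ i : Fin n, (prodEquiv n x).2 i = x i.succ := by
    intro i
    show x ((0 : Fin (n+1)).succAbove i) = x i.succ
    rw [Fin.succAbove_zero]
  simp_rw [this]
  rw [Fin.sum_univ_succ]

lemma norm_sq_eq (x : EuclideanSpace ℝ (Fin (n+1))) : ‖x‖^2 = ∑ i, (x i)^2 := by
  rw [EuclideanSpace.norm_eq, Real.sq_sqrt (by positivity)]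
  refine Finset.sum_congr rfl fun i _ => by rw [Real.norm_eq_abs, sq_abs]

lemma slice_ms {a b : ℝ} {g : ℝ → ℝ} (hg : Continuous g) :
    MeasurableSet {p : ℝ × (Fin n → ℝ) | p.1 ∈ Set.Icc a b ∧ ∑ i, p.2 i ^ 2 ≤ g p.1 ^ 2} := by
  have h1 : IsClosed {p : ℝ × (Fin n → ℝ) | p.1 ∈ Set.Icc a b} :=
    isClosed_Icc.preimage continuous_fst
  have h2 : IsClosed {p : ℝ × (Fin n → ℝ) | ∑ i, p.2 i ^ 2 ≤ g p.1 ^ 2} := by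
    apply isClosed_le
    · exact continuous_finset_sum _ (fun i _ => ((continuous_apply i).comp continuous_snd).pow 2)
    · exact (hg.comp continuous_fst).pow 2
  exact (h1.inter h2).measurableSet





lemma ball_vol {R : ℝ} (hR : 0 < R) :
    volume (closedBall (0 : EuclideanSpace ℝ (Fin (n+1))) R)
      = ENNReal.ofReal (∫ t in (-R)..R, f R n t) * ubvol n := by
  have hg : Continuous (fun t : ℝ => Real.sqrt (R^2 - t^2)) :=
    Real.continuous_sqrt.comp (by continuity)
  have hset : closedBall (0 : EuclideanSpace ℝ (Fin (n+1))) R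
      = prodEquiv n ⁻¹' {p : ℝ × (Fin n → ℝ) | p.1 ∈ Set.Icc (-R) R ∧
          ∑ i, p.2 i ^ 2 ≤ (Real.sqrt (R^2 - p.1^2)) ^ 2} := by
    ext x
    simp only [Set.mem_preimage, Set.mem_setOf_eq, mem_closedBall, dist_zero_right,
      Set.mem_Icc, prodEquiv_fst]
    have hsum := prodEquiv_snd_sum x
    have hns := norm_sq_eq x
    have hQ : (0:ℝ) ≤ ∑ i, ((prodEquiv n x).2 i)^2 := by positivity
    constructor
    · intro h
      have hx2 : ‖x‖^2 ≤ R^2 := by nlinarith [norm_nonneg x]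
      have ht2 : (x 0)^2 ≤ R^2 := by nlinarith
      have hrt : (0:ℝ) ≤ R^2 - (x 0)^2 := by nlinarith
      refine ⟨⟨by nlinarith, by nlinarith⟩, ?_⟩
      rw [Real.sq_sqrt hrt]
      nlinarith
    · rintro ⟨⟨h1, h2⟩, hq⟩
      rw [Real.sq_sqrt (by nlinarith)] at hq
      have : ‖x‖^2 ≤ R^2 := by nlinarith
      nlinarith [norm_nonneg x]
  rw [hset, (prodEquiv_mp).measure_preimage (slice_ms hg).nullMeasurableSet,
    vol_slice_set (by linarith) hg (fun t _ => Real.sqrt_nonneg _)]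
  rfl

lemma cap_vol_bound (hn : 1 ≤ n) {R φ : ℝ} (hR : 0 < R) (hφ0 : 0 < φ) (hφ : φ < π/2)
    (u : EuclideanSpace ℝ (Fin (n+1))) (hu : ‖u‖ = 1) :
    volume {x : EuclideanSpace ℝ (Fin (n+1)) | ‖x‖ ≤ R ∧ ‖x‖ * Real.cos φ ≤ (inner ℝ x u : ℝ)}
      ≤ ENNReal.ofReal (Real.sin φ ^ (n-1))
          * volume (closedBall (0 : EuclideanSpace ℝ (Fin (n+1))) R) := by
  have hpi := Real.pi_pos
  set s := Real.sin φ with hsdef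
  set c := Real.cos φ with hcdef
  have hs : 0 < s := Real.sin_pos_of_pos_of_lt_pi hφ0 (by linarith)
  have hs1 : s ≤ 1 := Real.sin_le_one φ
  have hc : 0 < c := Real.cos_pos_of_mem_Ioo ⟨by linarith, hφ⟩
  have hc1 : c ≤ 1 := Real.cos_le_one φ
  have htan : Real.tan φ = s / c := Real.tan_eq_sin_div_cos φ
  have htp : 0 < Real.tan φ := Real.tan_pos_of_pos_of_lt_pi_div_two hφ0 hφ
  -- reduce to the cap centered at e0
  set e0 : EuclideanSpace ℝ (Fin (n+1)) := EuclideanSpace.single 0 1 with he0def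
  have he0 : ‖e0‖ = 1 := by simp [he0def]
  set A0 : Set (EuclideanSpace ℝ (Fin (n+1))) := {x | ‖x‖ ≤ R ∧ ‖x‖ * c ≤ x 0} with hA0def
  have hA0closed : IsClosed A0 := by
    have h1 : IsClosed {x : EuclideanSpace ℝ (Fin (n+1)) | ‖x‖ ≤ R} :=
      isClosed_le continuous_norm continuous_const
    have h2 : IsClosed {x : EuclideanSpace ℝ (Fin (n+1)) | ‖x‖ * c ≤ x 0} :=
      isClosed_le (continuous_norm.mul continuous_const)
        (EuclideanSpace.proj (0 : Fin (n+1))).continuous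
    exact h1.inter h2
  have hvolA : volume {x : EuclideanSpace ℝ (Fin (n+1)) | ‖x‖ ≤ R ∧ ‖x‖ * c ≤ (inner ℝ x u : ℝ)}
      = volume A0 := by
    set T := Submodule.reflection (ℝ ∙ (e0 - u))ᗮ with hTdef
    have hT : T e0 = u := Submodule.reflection_sub (by rw [he0, hu])
    have hpre : {x : EuclideanSpace ℝ (Fin (n+1)) | ‖x‖ ≤ R ∧ ‖x‖ * c ≤ (inner ℝ x u : ℝ)}
        = T.symm ⁻¹' A0 := by
      ext x
      simp only [Set.mem_preimage, hA0def, Set.mem_setOf_eq]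
      have h1 : ‖T.symm x‖ = ‖x‖ := T.symm.norm_map x
      have h2 : (T.symm x) 0 = (inner ℝ x u : ℝ) := by
        have ha : ((T.symm x) 0 : ℝ) = (inner ℝ (T.symm x) e0 : ℝ) := by
          rw [he0def, EuclideanSpace.inner_single_right]; simp
        rw [ha, ← hT, ← LinearIsometryEquiv.inner_map_map T (T.symm x) e0,
          T.apply_symm_apply]
      rw [h1, h2]
    rw [hpre, (T.symm.measurePreserving).measure_preimage hA0closed.measurableSet.nullMeasurableSet]
  rw [hvolA]
  -- transfer to the product space
  have hg1 : Continuous (fun t : ℝ => t * Real.tan φ) := by continuity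
  have hg2 : Continuous (fun t : ℝ => Real.sqrt (R^2 - t^2)) :=
    Real.continuous_sqrt.comp (by continuity)
  set S1 : Set (ℝ × (Fin n → ℝ)) :=
    {p | p.1 ∈ Set.Icc 0 (R * c) ∧ ∑ i, p.2 i ^ 2 ≤ (p.1 * Real.tan φ) ^ 2} with hS1def
  set S2 : Set (ℝ × (Fin n → ℝ)) :=
    {p | p.1 ∈ Set.Icc (R * c) R ∧ ∑ i, p.2 i ^ 2 ≤ (Real.sqrt (R^2 - p.1^2)) ^ 2} with hS2def
  have hsub : A0 ⊆ prodEquiv n ⁻¹' (S1 ∪ S2) := by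
    intro x hx
    obtain ⟨h1, h2⟩ := hx
    have hsum := prodEquiv_snd_sum x
    have hns := norm_sq_eq x
    have hQ : (0:ℝ) ≤ ∑ i, ((prodEquiv n x).2 i)^2 := by positivity
    have ht0 : 0 ≤ x 0 := le_trans (by positivity) h2
    have hsq : ‖x‖^2 * c^2 ≤ (x 0)^2 := by
      have h3 := mul_self_le_mul_self (by positivity : (0:ℝ) ≤ ‖x‖ * c) h2
      nlinarith [h3]
    have hpyth : s^2 + c^2 = 1 := Real.sin_sq_add_cos_sq φ
    have hQt : (∑ i, ((prodEquiv n x).2 i)^2) * c^2 ≤ (x 0)^2 * s^2 := by nlinarith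
    have hQ1 : ∑ i, ((prodEquiv n x).2 i)^2 ≤ (x 0 * Real.tan φ)^2 := by
      have hexp : (x 0 * Real.tan φ)^2 * c^2 = (x 0)^2 * s^2 := by
        rw [htan]; field_simp
      have := hQt.trans_eq hexp.symm
      exact le_of_mul_le_mul_right this (by positivity)
    have hx2 : ‖x‖^2 ≤ R^2 := by nlinarith [norm_nonneg x]
    have hQ2 : ∑ i, ((prodEquiv n x).2 i)^2 ≤ R^2 - (x 0)^2 := by nlinarith
    have htR : x 0 ≤ R := by nlinarith
    simp only [Set.mem_preimage, Set.mem_union, hS1def, hS2def, Set.mem_setOf_eq,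
      Set.mem_Icc, prodEquiv_fst]
    by_cases hcase : x 0 ≤ R * c
    · exact Or.inl ⟨⟨ht0, hcase⟩, hQ1⟩
    · refine Or.inr ⟨⟨le_of_not_ge hcase, htR⟩, ?_⟩
      rw [Real.sq_sqrt (by nlinarith)]
      exact hQ2
  have hRc0 : (0:ℝ) ≤ R * c := by positivity
  have hRcR : R * c ≤ R := by nlinarith
  have hvol1 : volume S1 = ENNReal.ofReal (∫ t in (0:ℝ)..(R*c), (t * Real.tan φ)^n) * ubvol n :=
    vol_slice_set hRc0 hg1 (fun t ht => mul_nonneg ht.1 htp.le)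
  have hvol2 : volume S2 = ENNReal.ofReal (∫ t in (R*c)..R, f R n t) * ubvol n := by
    rw [vol_slice_set hRcR hg2 (fun t _ => Real.sqrt_nonneg _)]; rfl
  have hstep : volume A0 ≤ volume S1 + volume S2 := by
    calc volume A0 ≤ volume (prodEquiv n ⁻¹' (S1 ∪ S2)) := measure_mono hsub
      _ = volume (S1 ∪ S2) := (prodEquiv_mp).measure_preimage
          (((slice_ms hg1).union (slice_ms hg2)).nullMeasurableSet)
      _ ≤ volume S1 + volume S2 := measure_union_le _ _
  -- the real inequality
  set K := ∫ t in (0:ℝ)..R, f R n t with hKdef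
  have hKlb : R^(n+1)/(n+1) ≤ K := keyK hR
  have hK0 : 0 ≤ K := le_trans (by positivity) hKlb
  have hI2 : (∫ t in (-R)..R, f R n t) = 2 * K := by
    have hneg : (∫ t in (-R)..(0:ℝ), f R n t) = K := by
      have h := intervalIntegral.integral_comp_neg (f R n) (a := 0) (b := R)
      simp only [neg_zero] at h
      rw [← h]
      apply intervalIntegral.integral_congr
      intro t _
      simp [f]
    rw [← intervalIntegral.integral_add_adjacent_intervals
      (f_cont.intervalIntegrable (-R) 0) (f_cont.intervalIntegrable 0 R), hneg, hKdef]
    ring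
  have hcap : (∫ t in (R*c)..R, f R n t) ≤ s^(n+1) * K := keyB hR hφ0.le hφ.le
  have hIcone : (∫ t in (0:ℝ)..(R*c), (t * Real.tan φ)^n)
      = s^n * c * (R^(n+1)/(n+1)) := by
    simp_rw [mul_pow]
    rw [intervalIntegral.integral_mul_const, integral_pow]
    rw [htan]
    field_simp
    have hcn : c ^ n * (c ^ n)⁻¹ = 1 := mul_inv_cancel₀ (pow_ne_zero _ hc.ne')
    linear_combination (R * R ^ n * c * s ^ n) * hcn
  have hpow1 : s^n = s^(n-1) * s := by
    conv_lhs => rw [show n = (n-1)+1 from by omega]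
    rw [pow_succ]
  have hpow2 : s^(n+1) = s^(n-1) * s^2 := by
    rw [← pow_add]
    congr 1
    omega
  have e1 : s^n * c * (R^(n+1)/(n+1)) ≤ s^(n-1) * K := by
    have hX0 : (0:ℝ) ≤ R^(n+1)/(n+1) := by positivity
    have hsc : s * c ≤ 1 := mul_le_one₀ hs1 hc.le hc1
    have h' : s * c * (R^(n+1)/(n+1)) ≤ K := by
      nlinarith [mul_nonneg (sub_nonneg.2 hsc) hX0, hKlb]
    calc s^n * c * (R^(n+1)/(n+1)) = s^(n-1) * (s * c * (R^(n+1)/(n+1))) := by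
          rw [hpow1]; ring
      _ ≤ s^(n-1) * K := mul_le_mul_of_nonneg_left h' (pow_nonneg hs.le _)
  have e2 : s^(n+1) * K ≤ s^(n-1) * K := by
    calc s^(n+1) * K = s^(n-1) * (s^2 * K) := by rw [hpow2]; ring
      _ ≤ s^(n-1) * K := by
          have hs2 : s^2 ≤ 1 := by nlinarith
          exact mul_le_mul_of_nonneg_left
            (by nlinarith [mul_nonneg (sub_nonneg.2 hs2) hK0]) (pow_nonneg hs.le _)
  have hreal : (∫ t in (0:ℝ)..(R*c), (t * Real.tan φ)^n) + (∫ t in (R*c)..R, f R n t)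
      ≤ s^(n-1) * ∫ t in (-R)..R, f R n t := by
    rw [hI2, hIcone]
    have hexp2 : s^(n-1) * (2 * K) = s^(n-1) * K + s^(n-1) * K := by ring
    linarith [hcap, e1, e2, hexp2]
  have hIcone0 : 0 ≤ ∫ t in (0:ℝ)..(R*c), (t * Real.tan φ)^n :=
    intervalIntegral.integral_nonneg hRc0
      (fun t ht => pow_nonneg (mul_nonneg ht.1 htp.le) n)
  have hIcap0 : 0 ≤ ∫ t in (R*c)..R, f R n t :=
    intervalIntegral.integral_nonneg hRcR (fun t _ => f_nonneg t)
  calc volume A0 ≤ volume S1 + volume S2 := hstep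
    _ = ENNReal.ofReal ((∫ t in (0:ℝ)..(R*c), (t * Real.tan φ)^n)
          + (∫ t in (R*c)..R, f R n t)) * ubvol n := by
        rw [hvol1, hvol2, ENNReal.ofReal_add hIcone0 hIcap0, add_mul]
    _ ≤ ENNReal.ofReal (s^(n-1) * ∫ t in (-R)..R, f R n t) * ubvol n :=
        mul_le_mul_left (ENNReal.ofReal_le_ofReal hreal) _
    _ = ENNReal.ofReal (s^(n-1)) * (ENNReal.ofReal (∫ t in (-R)..R, f R n t) * ubvol n) := by
        rw [ENNReal.ofReal_mul (pow_nonneg hs.le _), mul_assoc]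
    _ = ENNReal.ofReal (s^(n-1)) * volume (closedBall (0 : EuclideanSpace ℝ (Fin (n+1))) R) := by
        rw [ball_vol hR]


theorem main_aux {n : ℕ} (hn : 1 ≤ n) (R : ℝ) (hR : 0 < R)
    (φ : ℝ) (hφ0 : 0 < φ) (hφ : φ < Real.pi / 2)
    (U : Finset (EuclideanSpace ℝ (Fin (n+1)))) (hU : ∀ u ∈ U, ‖u‖ = 1)
    (hcover : ∀ x : EuclideanSpace ℝ (Fin (n+1)), ‖x‖ = R →
      ∃ u ∈ U, R * Real.cos φ ≤ inner ℝ x u) :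
    1 ≤ (U.card : ℝ) * Real.sin φ ^ (n-1) := by
  have hpi := Real.pi_pos
  have hs : 0 < Real.sin φ := Real.sin_pos_of_pos_of_lt_pi hφ0 (by linarith)
  have hc : 0 < Real.cos φ := Real.cos_pos_of_mem_Ioo ⟨by linarith, hφ⟩
  have hcov : closedBall (0 : EuclideanSpace ℝ (Fin (n+1))) R
      ⊆ ⋃ u ∈ U, {x : EuclideanSpace ℝ (Fin (n+1)) |
          ‖x‖ ≤ R ∧ ‖x‖ * Real.cos φ ≤ (inner ℝ x u : ℝ)} := by
    intro x hx
    rw [mem_closedBall, dist_zero_right] at hx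
    by_cases hx0 : x = (0 : EuclideanSpace ℝ (Fin (n+1)))
    · have h1 : ‖((R:ℝ) • (EuclideanSpace.single 0 1 : EuclideanSpace ℝ (Fin (n+1))))‖ = R := by
        rw [norm_smul, EuclideanSpace.norm_single]
        simp [abs_of_pos hR]
      obtain ⟨u, hu, -⟩ := hcover _ h1
      refine Set.mem_iUnion₂.2 ⟨u, hu, ?_⟩
      rw [hx0]
      refine ⟨by simpa using hR.le, ?_⟩
      simp
    · have hxn : 0 < ‖x‖ := norm_pos_iff.2 hx0
      have h1 : ‖(R / ‖x‖) • x‖ = R := by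
        rw [norm_smul, Real.norm_eq_abs, abs_of_pos (div_pos hR hxn),
          div_mul_cancel₀ _ hxn.ne']
      obtain ⟨u, hu, hle⟩ := hcover _ h1
      rw [real_inner_smul_left] at hle
      refine Set.mem_iUnion₂.2 ⟨u, hu, hx, ?_⟩
      have h2 : ‖x‖ * (R * Real.cos φ) ≤ ‖x‖ * (R / ‖x‖ * (inner ℝ x u : ℝ)) :=
        mul_le_mul_of_nonneg_left hle hxn.le
      have h3 : ‖x‖ * (R / ‖x‖ * (inner ℝ x u : ℝ)) = R * (inner ℝ x u : ℝ) := by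
        field_simp
      rw [h3] at h2
      have h4 : ‖x‖ * Real.cos φ * R ≤ (inner ℝ x u : ℝ) * R := by nlinarith
      exact le_of_mul_le_mul_right h4 hR
  have hmeas : volume (closedBall (0 : EuclideanSpace ℝ (Fin (n+1))) R)
      ≤ (U.card : ENNReal) * (ENNReal.ofReal (Real.sin φ^(n-1))
          * volume (closedBall (0 : EuclideanSpace ℝ (Fin (n+1))) R)) := by
    calc volume (closedBall (0 : EuclideanSpace ℝ (Fin (n+1))) R)
        ≤ volume (⋃ u ∈ U, {x : EuclideanSpace ℝ (Fin (n+1)) |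
            ‖x‖ ≤ R ∧ ‖x‖ * Real.cos φ ≤ (inner ℝ x u : ℝ)}) := measure_mono hcov
      _ ≤ ∑ u ∈ U, volume {x : EuclideanSpace ℝ (Fin (n+1)) |
            ‖x‖ ≤ R ∧ ‖x‖ * Real.cos φ ≤ (inner ℝ x u : ℝ)} := measure_biUnion_finset_le U _
      _ ≤ ∑ _u ∈ U, ENNReal.ofReal (Real.sin φ^(n-1))
            * volume (closedBall (0 : EuclideanSpace ℝ (Fin (n+1))) R) :=
          Finset.sum_le_sum (fun u hu => cap_vol_bound hn hR hφ0 hφ u (hU u hu))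
      _ = (U.card : ENNReal) * (ENNReal.ofReal (Real.sin φ^(n-1))
            * volume (closedBall (0 : EuclideanSpace ℝ (Fin (n+1))) R)) := by
          rw [Finset.sum_const, nsmul_eq_mul]
  have hvfin : volume (closedBall (0 : EuclideanSpace ℝ (Fin (n+1))) R) ≠ ⊤ :=
    measure_closedBall_lt_top.ne
  have hvpos : volume (closedBall (0 : EuclideanSpace ℝ (Fin (n+1))) R) ≠ 0 :=
    ((measure_closedBall_pos volume (0 : EuclideanSpace ℝ (Fin (n+1))) hR).ne')
  have hVpos : 0 < (volume (closedBall (0 : EuclideanSpace ℝ (Fin (n+1))) R)).toReal :=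
    ENNReal.toReal_pos hvpos hvfin
  have hRHSfin : (U.card : ENNReal) * (ENNReal.ofReal (Real.sin φ^(n-1))
      * volume (closedBall (0 : EuclideanSpace ℝ (Fin (n+1))) R)) ≠ ⊤ := by
    apply ENNReal.mul_ne_top (ENNReal.natCast_ne_top _)
    exact ENNReal.mul_ne_top ENNReal.ofReal_ne_top hvfin
  have hreal := ENNReal.toReal_mono hRHSfin hmeas
  rw [ENNReal.toReal_mul, ENNReal.toReal_mul, ENNReal.toReal_ofReal (pow_nonneg hs.le _),
    ENNReal.toReal_natCast] at hreal
  by_contra hcon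
  push_neg at hcon
  have h2 := mul_lt_mul_of_pos_right hcon hVpos
  rw [one_mul] at h2
  nlinarith [hreal, h2]

end Stmt13

/-- Covering the sphere of radius R in ℝᴰ (D ≥ 3) by spherical caps of
half-angle φ ∈ (0, π/2) requires at least (1/sin φ)^(D−2) caps. -/
theorem stmt_13 {D : ℕ} (hD : 3 ≤ D) (R : ℝ) (hR : 0 < R)
    (φ : ℝ) (hφ0 : 0 < φ) (hφ : φ < Real.pi / 2)
    (U : Finset (EuclideanSpace ℝ (Fin D))) (hU : ∀ u ∈ U, ‖u‖ = 1)
    (hcover : ∀ x : EuclideanSpace ℝ (Fin D), ‖x‖ = R →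
      ∃ u ∈ U, R * Real.cos φ ≤ inner ℝ x u) :
    ((Real.sin φ)⁻¹) ^ (D - 2) ≤ (U.card : ℝ) := by
  obtain ⟨n, rfl⟩ : ∃ n, D = n + 1 := ⟨D - 1, by omega⟩
  have hn : 1 ≤ n := by omega
  have hpi := Real.pi_pos
  have hs : 0 < Real.sin φ := Real.sin_pos_of_pos_of_lt_pi hφ0 (by linarith)
  have h1 := Stmt13.main_aux hn R hR φ hφ0 hφ _ hU hcover
  have he : n+1-2 = n-1 := by omega
  have hgoal : ((Real.sin φ)⁻¹) ^ (n+1-2) = (Real.sin φ ^ (n-1))⁻¹ := by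
    rw [inv_pow, he]
  rw [hgoal, inv_eq_one_div, div_le_iff₀ (pow_pos hs _)]
  linarith [h1]
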